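/- Innerness descends from matrix amplifications: Let M be a unital complex C*-algebra whose center consists only of scalar multiples of the identity, let ψ be a *-algebra automorphism of M, and let n ≥ 1. Let ψ̃ denote the entrywise application of ψ to n×n matrices over M (corresponding to id_{B(H)} ⊗ ψ for an n-dimensional Hilbert space H). Then there exists a unitary U in the *-algebra Mₙ(M) of n×n matrices over M with ψ̃(A) = U·A·U* for all A ∈ Mₙ(M) if and only if there exists a unitary u ∈ M with ψ(m) = u·m·u* for all m ∈ M. -/

import Mathlib

/-- Innerness descends from matrix amplifications: for a unital complex C*-algebra `M`
with trivial center and a *-algebra automorphism `ψ` of `M`, the entrywise application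
of `ψ` to `n × n` matrices over `M` (`n ≥ 1`) is implemented by a unitary matrix
`U ∈ Mₙ(M)` if and only if `ψ` itself is implemented by a unitary `u ∈ M`. -/
theorem matrix_amplification_inner_iff_inner
    {M : Type*} [NormedRing M] [StarRing M] [CStarRing M] [CompleteSpace M]
    [NormedAlgebra ℂ M] [StarModule ℂ M]
    (hcenter : ∀ z : M, (∀ m : M, z * m = m * z) → ∃ c : ℂ, z = c • (1 : M))
    (ψ : M ≃⋆ₐ[ℂ] M)
    (n : ℕ) (hn : 1 ≤ n) :
    (∃ U : Matrix (Fin n) (Fin n) M, star U * U = 1 ∧ U * star U = 1 ∧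
        ∀ A : Matrix (Fin n) (Fin n) M, A.map (fun m => ψ m) = U * A * star U) ↔
      (∃ u : M, star u * u = 1 ∧ u * star u = 1 ∧ ∀ m : M, ψ m = u * m * star u) := by
  constructor
  · rintro ⟨U, hU1, hU2, hU⟩
    set z : Fin n := ⟨0, hn⟩ with hz
    have hcomm : ∀ i j : Fin n,
        U * Matrix.single i j (1 : M) = Matrix.single i j (1 : M) * U := by
      intro i j
      have hE : (Matrix.single i j (1 : M)).map (fun m => ψ m)
          = Matrix.single i j (1 : M) := by
        ext a b
        simp [Matrix.single, Matrix.map_apply, apply_ite (fun m => ψ m)]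
      have h := hU (Matrix.single i j (1 : M))
      rw [hE] at h
      calc U * Matrix.single i j (1 : M)
          = U * Matrix.single i j (1 : M) * (star U * U) := by rw [hU1, mul_one]
        _ = U * Matrix.single i j (1 : M) * star U * U := by simp only [mul_assoc]
        _ = Matrix.single i j (1 : M) * U := by rw [← h]
    have hzero : ∀ k i : Fin n, k ≠ i → U k i = 0 := by
      intro k i hki
      have h := congrFun (congrFun (hcomm i i) k) i
      rw [Matrix.mul_single_apply_same,
        Matrix.single_mul_apply_of_ne 1 i i k i hki] at h
      simpa using h
    refine ⟨U z z, ?_, ?_, ?_⟩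
    · have h := congrFun (congrFun hU1 z) z
      rw [Matrix.mul_apply] at h
      rw [Finset.sum_eq_single z (fun k _ hk => by
        simp [hzero k z hk]) (by simp)] at h
      simpa using h
    · have h := congrFun (congrFun hU2 z) z
      rw [Matrix.mul_apply] at h
      rw [Finset.sum_eq_single z (fun k _ hk => by
        simp [Matrix.star_apply, hzero z k (Ne.symm hk)]) (by simp)] at h
      simpa [Matrix.star_apply] using h
    · intro m
      have h := congrFun (congrFun (hU (Matrix.single z z m)) z) z
      have hL : (Matrix.single z z m).map (fun m => ψ m) z z = ψ m := by
        simp [Matrix.single]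
      rw [hL] at h
      rw [Matrix.mul_apply] at h
      rw [Finset.sum_eq_single z (fun l _ hl => by
        rw [Matrix.mul_single_apply_of_ne m z z z l hl]
        simp) (by simp)] at h
      rw [Matrix.mul_single_apply_same, Matrix.star_apply] at h
      rw [h]
  · rintro ⟨u, hu1, hu2, hu⟩
    have hstar : star (Matrix.diagonal fun _ : Fin n => u)
        = Matrix.diagonal (fun _ : Fin n => star u) := by
      rw [Matrix.star_eq_conjTranspose, Matrix.diagonal_conjTranspose]
      rfl
    refine ⟨Matrix.diagonal (fun _ => u), ?_, ?_, ?_⟩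
    · rw [hstar, Matrix.diagonal_mul_diagonal]
      simp only [hu1]
      exact Matrix.diagonal_one
    · rw [hstar, Matrix.diagonal_mul_diagonal]
      simp only [hu2]
      exact Matrix.diagonal_one
    · intro A
      ext i j
      rw [hstar]
      simp [Matrix.mul_diagonal, Matrix.diagonal_mul, hu, mul_assoc]
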